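/- For 1/2 < p < 1, the limit W(p) = lim_{n→∞} w_{n,p} equals the absolutely convergent series Σ_{k=1}^∞ p^k ∏_{j=k+1}^∞ (1 - p^j - q^j), where q = 1-p. -/

import Mathlib

noncomputable def w (p : ℝ) : ℕ → ℝ
  | 0 => 1
  | n + 1 =>
    p ^ (n + 1) +
      ∑ j ∈ (Finset.Icc 1 n).attach,
        ((n + 1).choose j.1 : ℝ) * p ^ (n + 1 - j.1) * (1 - p) ^ j.1 *
          (Finset.Icc j.1 n).attach.sup'
            (Finset.attach_nonempty_iff.mpr
              (Finset.nonempty_Icc.mpr (Finset.mem_Icc.mp j.2).2))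
            (fun m => w p m.1)
  decreasing_by
    exact Nat.lt_succ_of_le (Finset.mem_Icc.mp m.2).2


open Filter Finset


lemma mult_of_pos_le_one {f : ℕ → ℝ} (hpos : ∀ i, 0 < f i) (hle : ∀ i, f i ≤ 1) :
    Multipliable f := by
  have hanti : Antitone (fun s : Finset ℕ => ∏ i ∈ s, f i) := by
    intro s t hst
    calc ∏ i ∈ t, f i = (∏ i ∈ t \ s, f i) * ∏ i ∈ s, f i := (Finset.prod_sdiff hst).symm
    _ ≤ 1 * ∏ i ∈ s, f i := by
        apply mul_le_mul_of_nonneg_right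
        · exact Finset.prod_le_one (fun i _ => (hpos i).le) (fun i _ => hle i)
        · exact Finset.prod_nonneg (fun i _ => (hpos i).le)
    _ = ∏ i ∈ s, f i := one_mul _
  exact ⟨_, tendsto_atTop_ciInf hanti ⟨0, by rintro x ⟨s, rfl⟩; exact Finset.prod_nonneg (fun i _ => (hpos i).le)⟩⟩

lemma tail_tprod_eq {f : ℕ → ℝ} (hpos : ∀ i, 0 < f i) (hle : ∀ i, f i ≤ 1) (k : ℕ) :
    ∏' i, f (i + k) = (∏' i, f i) / ∏ i ∈ Finset.range k, f i := by
  have hg : Multipliable (fun i => f (i + k)) :=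
    mult_of_pos_le_one (fun i => hpos _) (fun i => hle _)
  have h1 : Tendsto (fun n => ∏ i ∈ Finset.range n, f (i + k)) atTop
      (nhds (∏' i, f (i + k))) := hg.hasProd.tendsto_prod_nat
  have h2 : Tendsto (fun n => ∏ i ∈ Finset.range n, f (i + k)) atTop
      (nhds ((∏' i, f i) / ∏ i ∈ Finset.range k, f i)) := by
    have hne : (∏ i ∈ Finset.range k, f i) ≠ 0 :=
      ne_of_gt (Finset.prod_pos (fun i _ => hpos i))
    have heq : ∀ n, ∏ i ∈ Finset.range n, f (i + k)
        = (∏ i ∈ Finset.range (k + n), f i) / ∏ i ∈ Finset.range k, f i := by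
      intro n
      rw [Finset.prod_range_add, mul_div_cancel_left₀ _ hne]
      exact Finset.prod_congr rfl (fun i _ => by rw [add_comm])
    have h3 : Tendsto (fun n => ∏ i ∈ Finset.range (k + n), f i) atTop
        (nhds (∏' i, f i)) := by
      have := (mult_of_pos_le_one hpos hle).hasProd.tendsto_prod_nat
      exact this.comp (tendsto_atTop_mono (fun n => Nat.le_add_left n k) tendsto_id)
    simpa only [heq] using h3.div_const _
  exact tendsto_nhds_unique h1 h2

lemma w_one (p : ℝ) : w p 1 = p := by
  have h : (Finset.Icc 1 0).attach = ∅ :=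
    Finset.eq_empty_of_forall_notMem (fun x => by have := Finset.mem_Icc.mp x.2; omega)
  rw [show (1:ℕ) = 0 + 1 from rfl, w, h]
  simp

lemma binom (p : ℝ) (n : ℕ) :
    ∑ j ∈ Finset.Icc 1 n, (((n+1).choose j : ℝ) * p^(n+1-j) * (1-p)^j)
      = 1 - p^(n+1) - (1-p)^(n+1) := by
  have h := add_pow (1-p) p (n+1)
  have hins : Finset.range (n+2) = insert 0 (insert (n+1) (Finset.Icc 1 n)) := by
    ext x; simp [Nat.lt_succ_iff]; omega
  rw [show (1-p)+p = 1 by ring, one_pow, hins, Finset.sum_insert (by simp),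
    Finset.sum_insert (by simp)] at h
  simp only [pow_zero, Nat.sub_zero, Nat.choose_zero_right, Nat.cast_one, mul_one, one_mul,
    Nat.sub_self, Nat.choose_self] at h
  have : ∑ j ∈ Finset.Icc 1 n, (((n+1).choose j : ℝ) * p^(n+1-j) * (1-p)^j)
      = ∑ m ∈ Finset.Icc 1 n, ((1-p)^m * p^(n+1-m) * ((n+1).choose m : ℝ)) :=
    Finset.sum_congr rfl (fun m _ => by ring)
  rw [this]; linarith

lemma w_step (p : ℝ) (n : ℕ) (hn : 1 ≤ n)
    (hmono : ∀ m, 1 ≤ m → m ≤ n → w p m ≤ w p n) :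
    w p (n+1) = p^(n+1) + (1 - p^(n+1) - (1-p)^(n+1)) * w p n := by
  rw [w]
  congr 1
  have hsup : ∀ j : {x // x ∈ Finset.Icc 1 n},
      (Finset.Icc j.1 n).attach.sup'
        (Finset.attach_nonempty_iff.mpr
          (Finset.nonempty_Icc.mpr (Finset.mem_Icc.mp j.2).2))
        (fun m => w p m.1) = w p n := by
    intro j
    apply le_antisymm
    · apply Finset.sup'_le
      intro m _
      exact hmono m.1 (le_trans (Finset.mem_Icc.mp j.2).1 (Finset.mem_Icc.mp m.2).1)
        (Finset.mem_Icc.mp m.2).2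
    · exact Finset.le_sup' (fun m : {x // x ∈ Finset.Icc j.1 n} => w p m.1)
        (Finset.mem_attach _ ⟨n, Finset.mem_Icc.mpr ⟨(Finset.mem_Icc.mp j.2).2, le_refl n⟩⟩)
  calc ∑ j ∈ (Finset.Icc 1 n).attach,
        ((n + 1).choose j.1 : ℝ) * p ^ (n + 1 - j.1) * (1 - p) ^ j.1 *
          (Finset.Icc j.1 n).attach.sup' _ (fun m => w p m.1)
      = ∑ j ∈ (Finset.Icc 1 n).attach,
        (((n + 1).choose j.1 : ℝ) * p ^ (n + 1 - j.1) * (1 - p) ^ j.1 * w p n) :=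
        Finset.sum_congr rfl (fun j _ => by rw [hsup j])
    _ = ∑ j ∈ Finset.Icc 1 n, (((n + 1).choose j : ℝ) * p ^ (n + 1 - j) * (1 - p) ^ j * w p n) :=
        Finset.sum_attach (Finset.Icc 1 n)
          (fun j => ((n + 1).choose j : ℝ) * p ^ (n + 1 - j) * (1 - p) ^ j * w p n)
    _ = (∑ j ∈ Finset.Icc 1 n, (((n + 1).choose j : ℝ) * p ^ (n + 1 - j) * (1 - p) ^ j)) * w p n := by
        rw [Finset.sum_mul]
    _ = (1 - p^(n+1) - (1-p)^(n+1)) * w p n := by rw [binom]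

noncomputable def T (p : ℝ) (n : ℕ) : ℝ := ∏ j ∈ Finset.Icc 2 n, (1 - p^j - (1-p)^j)

lemma cc_mem' {p : ℝ} (hp : 1/2 < p) (hp1 : p < 1) {j : ℕ} (hj : 2 ≤ j) :
    0 < 1 - p^j - (1-p)^j ∧ 1 - p^j - (1-p)^j < 1 := by
  have hp0 : (0:ℝ) < p := by linarith
  have hq0 : (0:ℝ) < 1 - p := by linarith
  have h1 : p^j ≤ p^2 := pow_le_pow_of_le_one hp0.le hp1.le hj
  have h2 : (1-p)^j ≤ (1-p)^2 := pow_le_pow_of_le_one hq0.le (by linarith) hj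
  have h3 : (0:ℝ) < p^j := pow_pos hp0 j
  have h4 : (0:ℝ) < (1-p)^j := pow_pos hq0 j
  exact ⟨by nlinarith, by linarith⟩

lemma T_pos {p : ℝ} (hp : 1/2 < p) (hp1 : p < 1) (n : ℕ) : 0 < T p n :=
  Finset.prod_pos fun j hj => (cc_mem' hp hp1 (Finset.mem_Icc.mp hj).1).1

lemma T_succ (p : ℝ) (n : ℕ) (hn : 1 ≤ n) :
    T p (n+1) = T p n * (1 - p^(n+1) - (1-p)^(n+1)) := by
  unfold T
  obtain ⟨m, rfl⟩ := Nat.exists_eq_add_of_le hn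
  rw [Finset.prod_Icc_succ_top (by omega)]

lemma T_anti {p : ℝ} (hp : 1/2 < p) (hp1 : p < 1) : Antitone (T p) := by
  apply antitone_nat_of_succ_le
  intro n
  rcases Nat.eq_zero_or_pos n with rfl | hn
  · simp [T]
  · rw [T_succ p n hn]
    have := T_pos hp hp1 n
    have := cc_mem' hp hp1 (show 2 ≤ n+1 by omega)
    nlinarith

lemma weier (s : Finset ℕ) (x : ℕ → ℝ) (h0 : ∀ j ∈ s, 0 ≤ x j) (h1 : ∀ j ∈ s, x j ≤ 1) :
    1 - ∑ j ∈ s, x j ≤ ∏ j ∈ s, (1 - x j) := by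
  classical
  induction s using Finset.induction with
  | empty => simp
  | @insert a s ha ih =>
    rw [Finset.prod_insert ha, Finset.sum_insert ha]
    have ihs := ih (fun j hj => h0 j (Finset.mem_insert_of_mem hj))
      (fun j hj => h1 j (Finset.mem_insert_of_mem hj))
    have hxa0 := h0 a (Finset.mem_insert_self a s)
    have hxa1 := h1 a (Finset.mem_insert_self a s)
    have hsum0 : 0 ≤ ∑ j ∈ s, x j :=
      Finset.sum_nonneg (fun j hj => h0 j (Finset.mem_insert_of_mem hj))
    have step : (1 - x a) * (1 - ∑ j ∈ s, x j) ≤ (1 - x a) * ∏ j ∈ s, (1 - x j) :=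
      mul_le_mul_of_nonneg_left ihs (by linarith)
    nlinarith

lemma geom_bound (m : ℕ) {x : ℝ} (hx0 : 0 < x) (hx1 : x < 1) :
    ∑ i ∈ Finset.range m, x^i ≤ 1/(1-x) := by
  rw [geom_sum_eq (ne_of_lt hx1)]
  have h1x : (0:ℝ) < 1 - x := by linarith
  have hxm : (0:ℝ) ≤ x^m := pow_nonneg hx0.le m
  have heq : (x^m - 1)/(x - 1) = (1 - x^m)/(1-x) := by
    rw [div_eq_div_iff (by linarith) (by linarith)]; ring
  rw [heq, div_le_div_iff₀ h1x h1x]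
  nlinarith

lemma tail_sum_le {p : ℝ} (hp : 1/2 < p) (hp1 : p < 1) (K n : ℕ) :
    ∑ j ∈ Finset.Icc (K+1) n, (p^j + (1-p)^j) ≤ p^(K+1)/(1-p) + (1-p)^(K+1)/p := by
  have hp0 : (0:ℝ) < p := by linarith
  have hq0 : (0:ℝ) < 1 - p := by linarith
  rw [← Finset.Ico_add_one_right_eq_Icc, Finset.sum_Ico_eq_sum_range]
  set m := n + 1 - (K + 1) with hm
  have he : ∀ i, p^(K+1+i) + (1-p)^(K+1+i) = p^(K+1)*p^i + (1-p)^(K+1)*(1-p)^i := by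
    intro i; rw [pow_add p (K+1) i, pow_add (1-p) (K+1) i]
  calc ∑ i ∈ Finset.range m, (p^(K+1+i) + (1-p)^(K+1+i))
      = p^(K+1) * ∑ i ∈ Finset.range m, p^i + (1-p)^(K+1) * ∑ i ∈ Finset.range m, (1-p)^i := by
        simp only [he]
        rw [Finset.sum_add_distrib, Finset.mul_sum, Finset.mul_sum]
    _ ≤ p^(K+1) * (1/(1-p)) + (1-p)^(K+1) * (1/p) :=
        add_le_add
          (mul_le_mul_of_nonneg_left (geom_bound m hp0 hp1) (pow_nonneg hp0.le _))
          (mul_le_mul_of_nonneg_left (by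
            have h := geom_bound m hq0 (by linarith : 1 - p < 1)
            rwa [show (1:ℝ)-(1-p) = p by ring] at h) (pow_nonneg hq0.le _))
    _ = p^(K+1)/(1-p) + (1-p)^(K+1)/p := by ring

lemma exists_lb {p : ℝ} (hp : 1/2 < p) (hp1 : p < 1) :
    ∃ m0 : ℝ, 0 < m0 ∧ ∀ n, m0 ≤ T p n := by
  have hp0 : (0:ℝ) < p := by linarith
  have hq0 : (0:ℝ) < 1 - p := by linarith
  have hp' : Tendsto (fun K : ℕ => p^(K+1)) atTop (nhds 0) := by
    have := (tendsto_pow_atTop_nhds_zero_of_lt_one hp0.le hp1).comp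
      (tendsto_atTop_mono (fun n => Nat.le_succ n) tendsto_id)
    exact this
  have hq' : Tendsto (fun K : ℕ => (1-p)^(K+1)) atTop (nhds 0) := by
    have := (tendsto_pow_atTop_nhds_zero_of_lt_one hq0.le (by linarith)).comp
      (tendsto_atTop_mono (fun n => Nat.le_succ n) tendsto_id)
    exact this
  have t1 : Tendsto (fun K : ℕ => p^(K+1)/(1-p) + (1-p)^(K+1)/p) atTop (nhds 0) := by
    have := (hp'.div_const (1-p)).add (hq'.div_const p)
    simpa using this
  obtain ⟨K, hK1, hK⟩ := ((eventually_ge_atTop 1).and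
    (t1.eventually_le_const (by norm_num : (0:ℝ) < 1/2))).exists
  refine ⟨T p K / 2, by have := T_pos hp hp1 K; linarith, fun n => ?_⟩
  rcases le_or_gt n K with h | h
  · have := T_anti hp hp1 h
    have := T_pos hp hp1 K
    linarith
  · have hsplit : T p n = T p K * ∏ j ∈ Finset.Icc (K+1) n, (1 - p^j - (1-p)^j) := by
      unfold T
      rw [← Finset.prod_union]
      · congr 1
        ext x
        simp only [Finset.mem_union, Finset.mem_Icc]
        omega
      · rw [Finset.disjoint_left]
        intro a h1 h2
        simp only [Finset.mem_Icc] at h1 h2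
        omega
    have hw : 1 - ∑ j ∈ Finset.Icc (K+1) n, (p^j + (1-p)^j)
        ≤ ∏ j ∈ Finset.Icc (K+1) n, (1 - p^j - (1-p)^j) := by
      have h := weier (Finset.Icc (K+1) n) (fun j => p^j + (1-p)^j)
        (fun j hj => by positivity)
        (fun j hj => by
          have h2j : 2 ≤ j := by have := (Finset.mem_Icc.mp hj).1; omega
          have := (cc_mem' hp hp1 h2j).1
          show p^j + (1-p)^j ≤ 1
          linarith)
      simp only [sub_add_eq_sub_sub] at h
      exact h
    have hhalf : (1:ℝ)/2 ≤ ∏ j ∈ Finset.Icc (K+1) n, (1 - p^j - (1-p)^j) := by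
      have := tail_sum_le hp hp1 K n
      linarith
    have hTK := T_pos hp hp1 K
    rw [hsplit]
    nlinarith


lemma w_key (p : ℝ) (hp : 1/2 < p) (hp1 : p < 1) :
    ∀ n, 1 ≤ n → (∀ m, 1 ≤ m → m ≤ n → w p m ≤ w p n) ∧
      w p n ≤ p^(n+1)/(p^(n+1)+(1-p)^(n+1)) := by
  have hp0 : (0:ℝ) < p := by linarith
  have hq0 : (0:ℝ) < 1 - p := by linarith
  have hd : ∀ k : ℕ, (0:ℝ) < p^k + (1-p)^k :=
    fun k => add_pos (pow_pos hp0 k) (pow_pos hq0 k)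
  intro n hn
  induction n, hn using Nat.le_induction with
  | base =>
    refine ⟨fun m h1 h2 => by rw [le_antisymm h2 h1], ?_⟩
    rw [w_one, le_div_iff₀ (hd 2), show (1:ℕ)+1 = 2 from rfl]
    nlinarith [mul_pos (mul_pos hp0 (show (0:ℝ) < 2*p-1 by linarith)) hq0]
  | succ n hn ih =>
    obtain ⟨hmono, hbd⟩ := ih
    have hrec := w_step p n hn hmono
    have hfb : w p n * (p^(n+1)+(1-p)^(n+1)) ≤ p^(n+1) := (le_div_iff₀ (hd (n+1))).mp hbd
    have hmono' : w p n ≤ w p (n+1) := by rw [hrec]; nlinarith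
    have h1 : w p (n+1) ≤ p^(n+1)/(p^(n+1)+(1-p)^(n+1)) := by
      rw [hrec]
      have hc : (0:ℝ) ≤ 1 - p^(n+1) - (1-p)^(n+1) :=
        (cc_mem' hp hp1 (by omega)).1.le
      calc p^(n+1) + (1 - p^(n+1) - (1-p)^(n+1)) * w p n
          ≤ p^(n+1) + (1 - p^(n+1) - (1-p)^(n+1)) * (p^(n+1)/(p^(n+1)+(1-p)^(n+1))) :=
            add_le_add_right (mul_le_mul_of_nonneg_left hbd hc) _
        _ = p^(n+1)/(p^(n+1)+(1-p)^(n+1)) := by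
            field_simp
            ring
    refine ⟨fun m h1' h2' => ?_, ?_⟩
    · rcases Nat.lt_succ_iff_lt_or_eq.mp (Nat.lt_succ_of_le h2') with h | h
      · exact le_trans (hmono m h1' (Nat.lt_succ_iff.mp h)) hmono'
      · rw [h]
    · refine h1.trans ?_
      rw [div_le_div_iff₀ (hd (n+1)) (hd (n+2))]
      have e1 : p^(n+2) = p^(n+1)*p := pow_succ p (n+1)
      have e2 : (1-p)^(n+2) = (1-p)^(n+1)*(1-p) := pow_succ (1-p) (n+1)
      nlinarith [pow_pos hp0 (n+1), pow_pos hq0 (n+1),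
        mul_pos (pow_pos hp0 (n+1)) (pow_pos hq0 (n+1))]


theorem above_limit_formula (p : ℝ) (hp : 1/2 < p) (hp1 : p < 1) :
    Summable (fun k : ℕ =>
      p ^ (k + 1) * ∏' j : ℕ, (1 - p ^ (k + 2 + j) - (1 - p) ^ (k + 2 + j))) ∧
    Filter.Tendsto (w p) Filter.atTop (nhds
      (∑' k : ℕ,
        p ^ (k + 1) * ∏' j : ℕ, (1 - p ^ (k + 2 + j) - (1 - p) ^ (k + 2 + j)))) := by
  have hp0 : (0:ℝ) < p := by linarith
  set f : ℕ → ℝ := fun i => 1 - p^(2+i) - (1-p)^(2+i) with hf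
  have hfpos : ∀ i, 0 < f i := fun i => (cc_mem' hp hp1 (by omega)).1
  have hfle : ∀ i, f i ≤ 1 := fun i => ((cc_mem' hp hp1 (by omega)).2).le
  have hT_range : ∀ n, T p n = ∏ i ∈ Finset.range (n-1), f i := by
    intro n
    unfold T
    rw [← Finset.Ico_add_one_right_eq_Icc, Finset.prod_Ico_eq_prod_range,
      show n + 1 - 2 = n - 1 by omega]
  set P := ∏' i, f i with hP
  obtain ⟨m0, hm0, hm0le⟩ := exists_lb hp hp1
  have hTt : Tendsto (fun n => T p n) atTop (nhds P) := by
    have h1 : Tendsto (fun n => ∏ i ∈ Finset.range n, f i) atTop (nhds P) :=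
      (mult_of_pos_le_one hfpos hfle).hasProd.tendsto_prod_nat
    have : (fun n => T p n) = fun n => ∏ i ∈ Finset.range (n-1), f i := funext hT_range
    rw [this]
    exact h1.comp (tendsto_sub_atTop_nat 1)
  have hPm0 : m0 ≤ P := ge_of_tendsto' hTt (fun n => hm0le n)
  have hP0 : 0 < P := lt_of_lt_of_le hm0 hPm0
  set g : ℕ → ℝ := fun k => p^(k+1) / T p (k+1) with hg
  have hgs : Summable g := by
    apply Summable.of_nonneg_of_le
      (fun k => div_nonneg (pow_nonneg hp0.le _) (T_pos hp hp1 _).le)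
      (fun k => ?_)
      ((summable_geometric_of_lt_one hp0.le hp1).mul_left (p/m0))
    calc p^(k+1) / T p (k+1) ≤ p^(k+1) / m0 :=
          div_le_div_of_nonneg_left (pow_nonneg hp0.le _) hm0 (hm0le _)
      _ = p/m0 * p^k := by rw [pow_succ]; ring
  have hclosed : ∀ n, 1 ≤ n → w p n = T p n * ∑ k ∈ Finset.range n, g k := by
    intro n hn
    induction n, hn using Nat.le_induction with
    | base =>
      have hT1 : T p 1 = 1 := by
        unfold T; rw [Finset.Icc_eq_empty (by omega), Finset.prod_empty]
      rw [w_one, Finset.sum_range_one, hg]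
      simp [hT1]
    | succ n hn ih =>
      have hT1 : T p (n+1) = T p n * (1 - p^(n+1) - (1-p)^(n+1)) := T_succ p n hn
      have hne : T p (n+1) ≠ 0 := (T_pos hp hp1 (n+1)).ne'
      rw [w_step p n hn (w_key p hp hp1 n hn).1, Finset.sum_range_succ, ih, mul_add,
        show g n = p^(n+1) / T p (n+1) from rfl, mul_div_cancel₀ _ hne, hT1]
      ring
  have hS : Tendsto (fun n => ∑ k ∈ Finset.range n, g k) atTop (nhds (∑' k, g k)) :=
    hgs.hasSum.tendsto_sum_nat
  have hlim : Tendsto (w p) atTop (nhds (P * ∑' k, g k)) := by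
    apply Tendsto.congr' _ (hTt.mul hS)
    filter_upwards [eventually_ge_atTop 1] with n hn
    exact (hclosed n hn).symm
  have hterm : ∀ k : ℕ,
      p^(k+1) * ∏' j : ℕ, (1 - p^(k+2+j) - (1-p)^(k+2+j)) = P * g k := by
    intro k
    have htail : ∏' j : ℕ, (1 - p^(k+2+j) - (1-p)^(k+2+j)) = P / T p (k+1) := by
      have h1 : ∏' i, f (i + k) = P / ∏ i ∈ Finset.range k, f i :=
        tail_tprod_eq hfpos hfle k
      have h2 : ∏ i ∈ Finset.range k, f i = T p (k+1) := by
        rw [hT_range (k+1)]; simp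
      have h3 : (fun j : ℕ => (1 - p^(k+2+j) - (1-p)^(k+2+j))) = fun i => f (i + k) := by
        funext i
        show _ = 1 - p^(2+(i+k)) - (1-p)^(2+(i+k))
        rw [show 2+(i+k) = k+2+i by omega]
      rw [h3, h1, h2]
    rw [htail, hg]
    field_simp
  constructor
  · rw [show (fun k : ℕ =>
        p ^ (k + 1) * ∏' j : ℕ, (1 - p ^ (k + 2 + j) - (1 - p) ^ (k + 2 + j)))
        = fun k => P * g k from funext hterm]
    exact hgs.mul_left P
  · have heq : (∑' k : ℕ,
        p ^ (k + 1) * ∏' j : ℕ, (1 - p ^ (k + 2 + j) - (1 - p) ^ (k + 2 + j)))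
        = P * ∑' k, g k := by
      rw [tsum_congr hterm, tsum_mul_left]
    rw [heq]
    exact hlim
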